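/- arXiv:quant-ph/0603283 — 2 statements merged into one kernel-verified Lean document; each statement's English description precedes it below -/
import Mathlib

section
/- Theorem 1(i): Let δ be an edge state on ℂᵐ⊗ℂⁿ, i.e. δ is positive semidefinite, its partial transpose δ^{T_B} is positive semidefinite, and δ strongly violates the range criterion (no nonzero product vector a⊗b lies in the range of δ while a⊗b̄ lies in the range of δ^{T_B}). Then for every ε > 0 and every pair of nonzero vectors a ∈ ℂᵐ, b ∈ ℂⁿ, the matrix δ − ε·(a⊗b)(a⊗b)† fails to be positive semidefinite or its partial transpose fails to be positive semidefinite. -/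
open Matrix ComplexOrder

variable {m n : ℕ}

/-- The partial transpose on the second factor: `(ρ^{T_B})_{(i,j),(k,l)} = ρ_{(i,l),(k,j)}`. -/
noncomputable def ptrans (ρ : Matrix (Fin m × Fin n) (Fin m × Fin n) ℂ) :
    Matrix (Fin m × Fin n) (Fin m × Fin n) ℂ :=
  fun p q => ρ (p.1, q.2) (q.1, p.2)

/-- The product vector `a ⊗ b ∈ ℂᵐ ⊗ ℂⁿ`, with `(i,j)`-th component `a i * b j`. -/
def prodVec (a : Fin m → ℂ) (b : Fin n → ℂ) : Fin m × Fin n → ℂ := fun p => a p.1 * b p.2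

/-- Key lemma: if `δ` is PSD and `δ - ε vv*` is PSD with `ε > 0`, then `v ∈ range δ`. -/
lemma mem_range_of_psd_sub {N : Type*} [Fintype N] [DecidableEq N]
    (δ : Matrix N N ℂ) (hδ : δ.PosSemidef) (v : N → ℂ) (ε : ℝ) (hε : 0 < ε)
    (h : (δ - (ε : ℂ) • Matrix.vecMulVec v (star v)).PosSemidef) :
    v ∈ LinearMap.range δ.mulVecLin := by
  -- Step 1: any kernel vector of δ is orthogonal to v.
  have hker : ∀ k : N → ℂ, δ *ᵥ k = 0 → star v ⬝ᵥ k = 0 := by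
    intro k hk
    have hPk : Matrix.vecMulVec v (star v) *ᵥ k = (star v ⬝ᵥ k) • v := by
      funext i
      simp only [Matrix.mulVec, Matrix.vecMulVec_apply, dotProduct, Pi.smul_apply,
        smul_eq_mul, Pi.star_apply]
      rw [Finset.sum_mul]
      exact Finset.sum_congr rfl fun j _ => by ring
    have h2 := h.dotProduct_mulVec_nonneg k
    rw [Matrix.sub_mulVec, hk, Matrix.smul_mulVec, hPk, zero_sub,
      dotProduct_neg, dotProduct_smul, dotProduct_smul] at h2
    set c : ℂ := star v ⬝ᵥ k with hc
    have hkc : star k ⬝ᵥ v = star c := by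
      rw [hc]; exact Matrix.star_dotProduct k v
    rw [hkc, smul_eq_mul, smul_eq_mul, Complex.star_def, Complex.mul_conj] at h2
    have hre : (0 : ℝ) ≤ -(ε * Complex.normSq c) := by
      have := Complex.le_def.mp h2
      simpa using this.1
    have hnsq : Complex.normSq c = 0 := by
      nlinarith [Complex.normSq_nonneg c]
    exact Complex.normSq_eq_zero.mp hnsq
  -- Step 2: range and kernel of a Hermitian matrix are orthogonal and complementary.
  have horth : ∀ (w k : N → ℂ), δ *ᵥ k = 0 → star (δ *ᵥ w) ⬝ᵥ k = 0 := by
    intro w k hk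
    rw [Matrix.star_mulVec, ← Matrix.dotProduct_mulVec, hδ.1, hk, dotProduct_zero]
  set R := LinearMap.range δ.mulVecLin with hR
  set K := LinearMap.ker δ.mulVecLin with hK
  have hdisj : R ⊓ K = ⊥ := by
    rw [Submodule.eq_bot_iff]
    rintro x ⟨⟨w, hw⟩, hx⟩
    have hxk : δ *ᵥ x = 0 := hx
    have := horth w x hxk
    rw [show δ *ᵥ w = x from hw] at this
    exact dotProduct_star_self_eq_zero.mp this
  have hrn := LinearMap.finrank_range_add_finrank_ker δ.mulVecLin
  have hdim := Submodule.finrank_sup_add_finrank_inf_eq R K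
  rw [hdisj, finrank_bot, add_zero] at hdim
  have hsup : R ⊔ K = ⊤ := by
    apply Submodule.eq_top_of_finrank_eq
    rw [hdim, hrn]
  have hv : v ∈ R ⊔ K := by rw [hsup]; trivial
  obtain ⟨r, hr, k, hk, hrk⟩ := Submodule.mem_sup.mp hv
  have hkk : δ *ᵥ k = 0 := hk
  have hc : star v ⬝ᵥ k = 0 := hker k hkk
  obtain ⟨w, hw⟩ := hr
  have : star k ⬝ᵥ k = 0 := by
    have hsplit : star v ⬝ᵥ k = star r ⬝ᵥ k + star k ⬝ᵥ k := by
      rw [← hrk]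
      simp [add_dotProduct, star_add]
    have hrk0 : star r ⬝ᵥ k = 0 := by
      rw [← hw]; exact horth w k hkk
    rw [hsplit, hrk0, zero_add] at hc
    exact hc
  have hk0 : k = 0 := dotProduct_star_self_eq_zero.mp this
  rw [hk0, add_zero] at hrk
  rw [← hrk]
  exact ⟨w, hw⟩

/-- Theorem 1(i): if `δ` is an edge state then subtracting any positive
multiple of a product state destroys positivity or PPT-ness. -/
theorem edge_state_subtraction (m n : ℕ)
    (δ : Matrix (Fin m × Fin n) (Fin m × Fin n) ℂ)
    (hpos : δ.PosSemidef) (hppt : (ptrans δ).PosSemidef)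
    (hedge : ∀ (a : Fin m → ℂ) (b : Fin n → ℂ), prodVec a b ≠ 0 →
      ¬ (prodVec a b ∈ LinearMap.range δ.mulVecLin ∧
          prodVec a (fun j => starRingEnd ℂ (b j)) ∈ LinearMap.range (ptrans δ).mulVecLin)) :
    ∀ ε : ℝ, 0 < ε → ∀ (a : Fin m → ℂ) (b : Fin n → ℂ), a ≠ 0 → b ≠ 0 →
      ¬ (δ - (ε : ℂ) • Matrix.vecMulVec (prodVec a b)
            (fun q => starRingEnd ℂ (prodVec a b q))).PosSemidef ∨
      ¬ (ptrans (δ - (ε : ℂ) • Matrix.vecMulVec (prodVec a b)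
            (fun q => starRingEnd ℂ (prodVec a b q)))).PosSemidef := by
  intro ε hε a b ha hb
  by_contra hcon
  rw [not_or, not_not, not_not] at hcon
  obtain ⟨h1, h2⟩ := hcon
  set v := prodVec a b with hv
  set v' := prodVec a (fun j => starRingEnd ℂ (b j)) with hv'
  have hstar : (fun q => starRingEnd ℂ (prodVec a b q)) = star v := rfl
  have hstar' : (fun q => starRingEnd ℂ (v' q)) = star v' := rfl
  -- nonvanishing of the product vector
  have hvne : v ≠ 0 := by
    obtain ⟨i, hi⟩ := Function.ne_iff.mp ha
    obtain ⟨j, hj⟩ := Function.ne_iff.mp hb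
    intro hz
    have := congr_fun hz (i, j)
    simp only [hv, prodVec, Pi.zero_apply] at this
    exact (mul_ne_zero hi hj) this
  refine hedge a b hvne ⟨?_, ?_⟩
  · rw [hstar] at h1
    exact mem_range_of_psd_sub δ hpos v ε hε h1
  · -- partial transpose side
    have hptP : ptrans ((ε : ℂ) • Matrix.vecMulVec v (star v)) =
        (ε : ℂ) • Matrix.vecMulVec v' (star v') := by
      funext p q
      simp only [ptrans, Matrix.smul_apply, Matrix.vecMulVec_apply, Pi.star_apply, hv, hv',
        prodVec, smul_eq_mul, RCLike.star_def, _root_.map_mul, Complex.conj_conj]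
      ring
    have hptlin : ptrans (δ - (ε : ℂ) • Matrix.vecMulVec v (star v)) =
        ptrans δ - ptrans ((ε : ℂ) • Matrix.vecMulVec v (star v)) := rfl
    rw [hstar, hptlin, hptP] at h2
    exact mem_range_of_psd_sub (ptrans δ) hppt v' ε hε h2
end

section
/- Theorem 1(ii): Every PPT entangled state can be decomposed into a separable part and an edge part. Precisely, let ρ be a matrix on ℂᵐ⊗ℂⁿ of trace 1 that is positive semidefinite, has positive semidefinite partial transpose, and is not separable. Then there exist p ∈ (0,1], a separable matrix ρ_sep of trace 1, and a matrix δ of trace 1 such that δ is positive semidefinite, δ^{T_B} is positive semidefinite, δ strongly violates the range criterion, and ρ = (1−p)·ρ_sep + p·δ. -/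
open Matrix ComplexOrder

variable {m n : ℕ}

/-- A matrix on `ℂᵐ ⊗ ℂⁿ` is separable if it is a finite sum of outer products
`w w†` of product vectors `w = a ⊗ b`. -/
noncomputable def IsSeparableState (ρ : Matrix (Fin m × Fin n) (Fin m × Fin n) ℂ) : Prop :=
  ∃ (k : ℕ) (a : Fin k → Fin m → ℂ) (b : Fin k → Fin n → ℂ),
    ρ = ∑ i : Fin k,
      Matrix.vecMulVec (prodVec (a i) (b i)) (fun q => starRingEnd ℂ (prodVec (a i) (b i) q))

set_option linter.unusedSectionVars false

variable {ι : Type*} [Fintype ι] [DecidableEq ι]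

lemma herm_form_star {M : Matrix ι ι ℂ} (hM : M.IsHermitian) (x : ι → ℂ) :
    star (star x ⬝ᵥ M *ᵥ x) = star x ⬝ᵥ M *ᵥ x := by
  calc star (star x ⬝ᵥ M *ᵥ x) = star (M *ᵥ x) ⬝ᵥ x := by
        rw [star_dotProduct]; simp [dotProduct_comm]
    _ = star x ⬝ᵥ M *ᵥ x := by
        rw [star_mulVec, hM.eq, ← dotProduct_mulVec, dotProduct_comm]

lemma herm_form_im {M : Matrix ι ι ℂ} (hM : M.IsHermitian) (x : ι → ℂ) :
    (star x ⬝ᵥ M *ᵥ x).im = 0 := by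
  have h2 := congrArg Complex.im (herm_form_star hM x)
  simp at h2; linarith

lemma posSemidef_of_re {M : Matrix ι ι ℂ} (hM : M.IsHermitian)
    (h : ∀ x, 0 ≤ (star x ⬝ᵥ M *ᵥ x).re) : M.PosSemidef := by
  refine Matrix.PosSemidef.of_dotProduct_mulVec_nonneg hM fun x => ?_
  rw [Complex.nonneg_iff]
  exact ⟨h x, (herm_form_im hM x).symm⟩

lemma outer_herm (v : ι → ℂ) : (vecMulVec v (star v)).IsHermitian := by
  ext i j
  simp [conjTranspose_apply, vecMulVec_apply, mul_comm]

lemma outer_mulVec (v x : ι → ℂ) :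
    vecMulVec v (star v) *ᵥ x = (star v ⬝ᵥ x) • v := by
  ext i
  simp [mulVec, vecMulVec_apply, dotProduct, Finset.mul_sum, mul_comm, mul_left_comm]

lemma outer_form (v x : ι → ℂ) :
    star x ⬝ᵥ (vecMulVec v (star v) *ᵥ x) = Complex.normSq (star v ⬝ᵥ x) := by
  rw [outer_mulVec, dotProduct_smul]
  have h1 : star x ⬝ᵥ v = star (star v ⬝ᵥ x) := by
    rw [star_dotProduct]
  rw [smul_eq_mul, h1]
  simpa [Complex.star_def, mul_comm] using (Complex.mul_conj (star v ⬝ᵥ x))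

lemma outer_posSemidef (v : ι → ℂ) : (vecMulVec v (star v)).PosSemidef := by
  refine posSemidef_of_re (outer_herm v) fun x => ?_
  rw [outer_form]
  simp [Complex.normSq_nonneg]

lemma mem_range_of_orth_ker {M : Matrix ι ι ℂ} (hM : M.IsHermitian) {x : ι → ℂ}
    (h : ∀ y, M *ᵥ y = 0 → star y ⬝ᵥ x = 0) : x ∈ LinearMap.range M.mulVecLin := by
  classical
  set U : Matrix ι ι ℂ := (hM.eigenvectorUnitary : Matrix ι ι ℂ) with hUdef
  have hU1 : star U * U = 1 := Matrix.mem_unitaryGroup_iff'.mp hM.eigenvectorUnitary.2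
  have hU2 : U * star U = 1 := Matrix.mem_unitaryGroup_iff.mp hM.eigenvectorUnitary.2
  set d : ι → ℝ := hM.eigenvalues with hddef
  set z : ι → ℂ := star U *ᵥ x with hzdef
  have hz : ∀ i, d i = 0 → z i = 0 := by
    intro i hi
    have hcol : (fun j => U j i) = ⇑(hM.eigenvectorBasis i) := by
      funext j; exact hM.eigenvectorUnitary_apply j i
    have hker : M *ᵥ ⇑(hM.eigenvectorBasis i) = 0 := by
      have := hM.mulVec_eigenvectorBasis i
      rw [this, show hM.eigenvalues i = (0:ℝ) from hi]; simp
    have := h _ hker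
    calc z i = star (fun j => U j i) ⬝ᵥ x := by
          simp [hzdef, mulVec, dotProduct, star_apply, conjTranspose_apply]
      _ = 0 := by rw [hcol]; exact this
  refine ⟨U *ᵥ (fun i => if d i = 0 then 0 else ((d i : ℂ))⁻¹ * z i), ?_⟩
  rw [mulVecLin_apply]
  conv_lhs => rw [hM.spectral_theorem]
  show (U * diagonal (RCLike.ofReal ∘ d) * star U) *ᵥ
      (U *ᵥ fun i => if d i = 0 then 0 else ((d i : ℂ))⁻¹ * z i) = x
  rw [mulVec_mulVec, mul_assoc, hU1, mul_one, ← mulVec_mulVec]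
  have hdz : (diagonal (RCLike.ofReal ∘ d)) *ᵥ (fun i => if d i = 0 then 0 else ((d i : ℂ))⁻¹ * z i) = z := by
    funext i
    rw [mulVec_diagonal]
    by_cases hi : d i = 0
    · simp [hi, hz i hi]
    · have : (d i : ℂ) ≠ 0 := by exact_mod_cast hi
      simp only [Function.comp_apply, if_neg hi]
      exact mul_inv_cancel_left₀ this (z i)
  rw [hdz, hzdef, mulVec_mulVec, hU2, one_mulVec]

lemma dot_cauchy_schwarz (a b : ι → ℂ) :
    Complex.normSq (star a ⬝ᵥ b) ≤ (star a ⬝ᵥ a).re * (star b ⬝ᵥ b).re := by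
  let a' : EuclideanSpace ℂ ι := (WithLp.equiv 2 (ι → ℂ)).symm a
  let b' : EuclideanSpace ℂ ι := (WithLp.equiv 2 (ι → ℂ)).symm b
  have hab : (inner ℂ a' b' : ℂ) = star a ⬝ᵥ b := by
    rw [EuclideanSpace.inner_eq_star_dotProduct]; exact dotProduct_comm _ _
  have haa : (inner ℂ a' a' : ℂ) = star a ⬝ᵥ a := by
    rw [EuclideanSpace.inner_eq_star_dotProduct]; exact dotProduct_comm _ _
  have hbb : (inner ℂ b' b' : ℂ) = star b ⬝ᵥ b := by
    rw [EuclideanSpace.inner_eq_star_dotProduct]; exact dotProduct_comm _ _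
  have hcs := norm_inner_le_norm (𝕜 := ℂ) a' b'
  have h1 : Complex.normSq (star a ⬝ᵥ b) = ‖(inner ℂ a' b' : ℂ)‖ ^ 2 := by
    rw [hab, ← Complex.sq_norm]
  have h2 : (star a ⬝ᵥ a).re = ‖a'‖ ^ 2 := by
    rw [← haa, ← inner_self_eq_norm_sq (𝕜 := ℂ)]; rfl
  have h3 : (star b ⬝ᵥ b).re = ‖b'‖ ^ 2 := by
    rw [← hbb, ← inner_self_eq_norm_sq (𝕜 := ℂ)]; rfl
  rw [h1, h2, h3]
  calc ‖(inner ℂ a' b' : ℂ)‖ ^ 2 ≤ (‖a'‖ * ‖b'‖) ^ 2 := by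
        apply pow_le_pow_left₀ (norm_nonneg _) hcs
    _ = ‖a'‖ ^ 2 * ‖b'‖ ^ 2 := by ring

lemma psd_cauchy_schwarz {P : Matrix ι ι ℂ} (hP : P.PosSemidef) (u x : ι → ℂ) :
    Complex.normSq (star u ⬝ᵥ P *ᵥ x) ≤ (star u ⬝ᵥ P *ᵥ u).re * (star x ⬝ᵥ P *ᵥ x).re := by
  obtain ⟨B, rfl⟩ : ∃ B : Matrix ι ι ℂ, P = Bᴴ * B := by
    open scoped MatrixOrder in exact CStarAlgebra.nonneg_iff_eq_star_mul_self.mp hP.nonneg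
  have key : ∀ y z : ι → ℂ, star y ⬝ᵥ (Bᴴ * B) *ᵥ z = star (B *ᵥ y) ⬝ᵥ (B *ᵥ z) := by
    intro y z
    rw [← mulVec_mulVec, star_mulVec, ← dotProduct_mulVec]
  rw [key u x, key u u, key x x]
  exact dot_cauchy_schwarz (B *ᵥ u) (B *ᵥ x)

lemma exists_eps {P : Matrix ι ι ℂ} (hP : P.PosSemidef) {v : ι → ℂ} (hv : v ≠ 0)
    (hvr : v ∈ LinearMap.range P.mulVecLin) :
    ∃ ε : ℝ, 0 < ε ∧ ∀ x, ε * Complex.normSq (star v ⬝ᵥ x) ≤ (star x ⬝ᵥ P *ᵥ x).re := by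
  obtain ⟨u, hu⟩ := hvr
  rw [mulVecLin_apply] at hu
  set c : ℝ := (star u ⬝ᵥ P *ᵥ u).re with hc
  have hc0 : 0 < c := by
    rcases lt_or_eq_of_le (hP.re_dotProduct_nonneg u) with h | h
    · exact h
    · exfalso
      apply hv
      rw [← hu]
      rw [← hP.dotProduct_mulVec_zero_iff u]
      have him := herm_form_im hP.isHermitian u
      have hre : (star u ⬝ᵥ P *ᵥ u).re = 0 := by
        have := h.symm
        simpa [RCLike.re_to_complex] using this
      apply Complex.ext <;> simp [hre, him]
  refine ⟨c⁻¹, by positivity, fun x => ?_⟩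
  have hsv : star v ⬝ᵥ x = star u ⬝ᵥ P *ᵥ x := by
    rw [← hu, star_mulVec, hP.isHermitian.eq, ← dotProduct_mulVec]
  rw [hsv]
  have := psd_cauchy_schwarz hP u x
  rw [inv_mul_le_iff₀ hc0]  -- c⁻¹ * q ≤ r ↔ q ≤ c * r
  calc Complex.normSq (star u ⬝ᵥ P *ᵥ x) ≤ c * (star x ⬝ᵥ P *ᵥ x).re := this
  _ = c * (star x ⬝ᵥ P *ᵥ x).re := rfl

lemma sub_outer_herm {A : Matrix ι ι ℂ} (hA : A.IsHermitian) (t : ℝ) (v : ι → ℂ) :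
    (A - (t : ℂ) • vecMulVec v (star v)).IsHermitian := by
  apply hA.sub
  ext i j
  simp [conjTranspose_apply, vecMulVec_apply, Complex.ext_iff, mul_comm]

lemma sub_outer_form (A : Matrix ι ι ℂ) (t : ℝ) (v x : ι → ℂ) :
    (star x ⬝ᵥ (A - (t : ℂ) • vecMulVec v (star v)) *ᵥ x).re
      = (star x ⬝ᵥ A *ᵥ x).re - t * Complex.normSq (star v ⬝ᵥ x) := by
  rw [sub_mulVec, dotProduct_sub, smul_mulVec, dotProduct_smul, outer_form]
  simp

lemma psd_sub_outer_iff {A : Matrix ι ι ℂ} (hA : A.PosSemidef) (t : ℝ) (v : ι → ℂ) :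
    (A - (t : ℂ) • vecMulVec v (star v)).PosSemidef
      ↔ ∀ x, t * Complex.normSq (star v ⬝ᵥ x) ≤ (star x ⬝ᵥ A *ᵥ x).re := by
  constructor
  · intro h x
    have := h.re_dotProduct_nonneg x
    rw [RCLike.re_to_complex, sub_outer_form] at this
    linarith
  · intro h
    refine posSemidef_of_re (sub_outer_herm hA.isHermitian t v) fun x => ?_
    rw [sub_outer_form]
    linarith [h x]

lemma ker_sub_outer {A : Matrix ι ι ℂ} (hA : A.PosSemidef) {t : ℝ} (ht : 0 ≤ t) (v : ι → ℂ)
    (hps : (A - (t : ℂ) • vecMulVec v (star v)).PosSemidef)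
    {x : ι → ℂ} (hx : A *ᵥ x = 0) : (A - (t : ℂ) • vecMulVec v (star v)) *ᵥ x = 0 := by
  rw [← hps.dotProduct_mulVec_zero_iff]
  have h1 : (star x ⬝ᵥ A *ᵥ x).re = 0 := by rw [hx]; simp
  have h2 := (psd_sub_outer_iff hA t v).mp hps x
  have h3 : 0 ≤ t * Complex.normSq (star v ⬝ᵥ x) := mul_nonneg ht (Complex.normSq_nonneg _)
  have him := herm_form_im (sub_outer_herm hA.isHermitian t v) x
  apply Complex.ext
  · rw [sub_outer_form]; simp; linarith
  · simpa using him

lemma rank_sub_outer_le {A : Matrix ι ι ℂ} (hA : A.PosSemidef) {t : ℝ} (ht : 0 ≤ t) (v : ι → ℂ)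
    (hps : (A - (t : ℂ) • vecMulVec v (star v)).PosSemidef) :
    (A - (t : ℂ) • vecMulVec v (star v)).rank ≤ A.rank
      ∧ ((A - (t : ℂ) • vecMulVec v (star v)).rank = A.rank →
          LinearMap.ker (A - (t : ℂ) • vecMulVec v (star v)).mulVecLin
            = LinearMap.ker A.mulVecLin) := by
  set A' := A - (t : ℂ) • vecMulVec v (star v) with hA'
  have hker : LinearMap.ker A.mulVecLin ≤ LinearMap.ker A'.mulVecLin := by
    intro x hx
    rw [LinearMap.mem_ker, mulVecLin_apply] at *
    exact ker_sub_outer hA ht v hps hx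
  have hrn := LinearMap.finrank_range_add_finrank_ker (A.mulVecLin)
  have hrn' := LinearMap.finrank_range_add_finrank_ker (A'.mulVecLin)
  have hkle : Module.finrank ℂ (LinearMap.ker A.mulVecLin)
      ≤ Module.finrank ℂ (LinearMap.ker A'.mulVecLin) := Submodule.finrank_mono hker
  have hA'rank : A'.rank = Module.finrank ℂ (LinearMap.range A'.mulVecLin) := rfl
  have hArank : A.rank = Module.finrank ℂ (LinearMap.range A.mulVecLin) := rfl
  constructor
  · omega
  · intro heq
    have : Module.finrank ℂ (LinearMap.ker A'.mulVecLin)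
        ≤ Module.finrank ℂ (LinearMap.ker A.mulVecLin) := by omega
    exact (Submodule.eq_of_le_of_finrank_le hker this).symm

lemma core_subtract {A B : Matrix ι ι ℂ} (hA : A.PosSemidef) (hB : B.PosSemidef)
    {v w : ι → ℂ} (hv : v ≠ 0) (hw : w ≠ 0)
    (hvr : v ∈ LinearMap.range A.mulVecLin) (hwr : w ∈ LinearMap.range B.mulVecLin) :
    ∃ t : ℝ, 0 ≤ t ∧
      (A - (t:ℂ) • vecMulVec v (star v)).PosSemidef ∧
      (B - (t:ℂ) • vecMulVec w (star w)).PosSemidef ∧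
      (A - (t:ℂ) • vecMulVec v (star v)).rank + (B - (t:ℂ) • vecMulVec w (star w)).rank
        < A.rank + B.rank := by
  set qA : (ι → ℂ) → ℝ := fun x => (star x ⬝ᵥ A *ᵥ x).re with hqA
  set qB : (ι → ℂ) → ℝ := fun x => (star x ⬝ᵥ B *ᵥ x).re with hqB
  have hqA0 : ∀ x, 0 ≤ qA x := fun x => by
    simpa [RCLike.re_to_complex] using hA.re_dotProduct_nonneg x
  have hqB0 : ∀ x, 0 ≤ qB x := fun x => by
    simpa [RCLike.re_to_complex] using hB.re_dotProduct_nonneg x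
  set S : Set ℝ := {t | 0 ≤ t ∧ (∀ x, t * Complex.normSq (star v ⬝ᵥ x) ≤ qA x)
      ∧ (∀ x, t * Complex.normSq (star w ⬝ᵥ x) ≤ qB x)} with hS
  have h0S : (0:ℝ) ∈ S := by
    refine ⟨le_refl _, fun x => ?_, fun x => ?_⟩ <;> simp [hqA0 x, hqB0 x]
  have hne : S.Nonempty := ⟨0, h0S⟩
  have hdv : 0 < Complex.normSq (star v ⬝ᵥ v) := by
    rw [Complex.normSq_pos]
    intro h
    exact hv ((dotProduct_star_self_eq_zero).mp h)
  have hbdd : BddAbove S := by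
    refine ⟨qA v / Complex.normSq (star v ⬝ᵥ v), fun t ht => ?_⟩
    exact (le_div_iff₀ hdv).mpr (ht.2.1 v)
  set t₀ : ℝ := sSup S with ht₀
  have ht₀S : t₀ ∈ S := by
    refine ⟨le_csSup hbdd h0S, fun x => ?_, fun x => ?_⟩
    · rcases eq_or_lt_of_le (Complex.normSq_nonneg (star v ⬝ᵥ x)) with h | h
      · rw [← h, mul_zero]; exact hqA0 x
      · rw [← le_div_iff₀ h]
        exact csSup_le hne fun s hs => (le_div_iff₀ h).mpr (hs.2.1 x)
    · rcases eq_or_lt_of_le (Complex.normSq_nonneg (star w ⬝ᵥ x)) with h | h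
      · rw [← h, mul_zero]; exact hqB0 x
      · rw [← le_div_iff₀ h]
        exact csSup_le hne fun s hs => (le_div_iff₀ h).mpr (hs.2.2 x)
  obtain ⟨ht₀0, ht₀A, ht₀B⟩ := ht₀S
  have hA' : (A - (t₀:ℂ) • vecMulVec v (star v)).PosSemidef :=
    (psd_sub_outer_iff hA t₀ v).mpr ht₀A
  have hB' : (B - (t₀:ℂ) • vecMulVec w (star w)).PosSemidef :=
    (psd_sub_outer_iff hB t₀ w).mpr ht₀B
  refine ⟨t₀, ht₀0, hA', hB', ?_⟩
  by_contra hrk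
  push_neg at hrk
  obtain ⟨hrA, hkerA⟩ := rank_sub_outer_le hA ht₀0 v hA'
  obtain ⟨hrB, hkerB⟩ := rank_sub_outer_le hB ht₀0 w hB'
  have heqA : (A - (t₀:ℂ) • vecMulVec v (star v)).rank = A.rank := by omega
  have heqB : (B - (t₀:ℂ) • vecMulVec w (star w)).rank = B.rank := by omega
  have hkA := hkerA heqA
  have hkB := hkerB heqB
  -- v in range of A'
  have hvmem : v ∈ LinearMap.range (A - (t₀:ℂ) • vecMulVec v (star v)).mulVecLin := by
    apply mem_range_of_orth_ker (sub_outer_herm hA.isHermitian t₀ v)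
    intro y hy
    have hyk : A *ᵥ y = 0 := by
      have : y ∈ LinearMap.ker A.mulVecLin := by
        rw [← hkA, LinearMap.mem_ker, mulVecLin_apply]; exact hy
      rwa [LinearMap.mem_ker, mulVecLin_apply] at this
    obtain ⟨u, hu⟩ := hvr
    rw [mulVecLin_apply] at hu
    rw [← hu, dotProduct_mulVec, show star y ᵥ* A = star (A *ᵥ y) from
      by rw [star_mulVec, hA.isHermitian.eq], hyk]
    simp
  have hwmem : w ∈ LinearMap.range (B - (t₀:ℂ) • vecMulVec w (star w)).mulVecLin := by
    apply mem_range_of_orth_ker (sub_outer_herm hB.isHermitian t₀ w)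
    intro y hy
    have hyk : B *ᵥ y = 0 := by
      have : y ∈ LinearMap.ker B.mulVecLin := by
        rw [← hkB, LinearMap.mem_ker, mulVecLin_apply]; exact hy
      rwa [LinearMap.mem_ker, mulVecLin_apply] at this
    obtain ⟨u, hu⟩ := hwr
    rw [mulVecLin_apply] at hu
    rw [← hu, dotProduct_mulVec, show star y ᵥ* B = star (B *ᵥ y) from
      by rw [star_mulVec, hB.isHermitian.eq], hyk]
    simp
  obtain ⟨εA, hεA0, hεA⟩ := exists_eps hA' hv hvmem
  obtain ⟨εB, hεB0, hεB⟩ := exists_eps hB' hw hwmem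
  set ε := min εA εB with hε
  have hε0 : 0 < ε := lt_min hεA0 hεB0
  have hmem : t₀ + ε ∈ S := by
    refine ⟨by linarith, fun x => ?_, fun x => ?_⟩
    · have h1 := hεA x
      rw [sub_outer_form] at h1
      have h2 : ε * Complex.normSq (star v ⬝ᵥ x) ≤ εA * Complex.normSq (star v ⬝ᵥ x) :=
        mul_le_mul_of_nonneg_right (min_le_left _ _) (Complex.normSq_nonneg _)
      have : qA x = (star x ⬝ᵥ A *ᵥ x).re := rfl
      rw [this]; nlinarith [Complex.normSq_nonneg (star v ⬝ᵥ x)]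
    · have h1 := hεB x
      rw [sub_outer_form] at h1
      have h2 : ε * Complex.normSq (star w ⬝ᵥ x) ≤ εB * Complex.normSq (star w ⬝ᵥ x) :=
        mul_le_mul_of_nonneg_right (min_le_right _ _) (Complex.normSq_nonneg _)
      have : qB x = (star x ⬝ᵥ B *ᵥ x).re := rfl
      rw [this]; nlinarith [Complex.normSq_nonneg (star w ⬝ᵥ x)]
  have := le_csSup hbdd hmem
  linarith

-- ===== trace / misc PSD lemmas =====

lemma psd_diag_nonneg {M : Matrix ι ι ℂ} (hM : M.PosSemidef) (p : ι) : 0 ≤ M p p := by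
  have := hM.dotProduct_mulVec_nonneg (Pi.single p 1)
  simpa [mulVec_single, dotProduct, Pi.single_apply, Finset.sum_ite_eq] using this

lemma psd_trace_nonneg {M : Matrix ι ι ℂ} (hM : M.PosSemidef) : 0 ≤ M.trace :=
  Finset.sum_nonneg fun p _ => psd_diag_nonneg hM p

lemma psd_trace_zero {M : Matrix ι ι ℂ} (hM : M.PosSemidef) (h : M.trace = 0) : M = 0 := by
  have hdiag : ∀ p, M p p = 0 := by
    intro p
    have := (Finset.sum_eq_zero_iff_of_nonneg (fun p _ => psd_diag_nonneg hM p)).mp h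
    exact this p (Finset.mem_univ p)
  have hcol : ∀ p, M *ᵥ Pi.single p 1 = 0 := by
    intro p
    rw [← hM.dotProduct_mulVec_zero_iff]
    simpa [mulVec_single, dotProduct, Pi.single_apply, Finset.sum_ite_eq] using hdiag p
  ext i j
  have := congrFun (hcol j) i
  simpa [mulVec_single] using this

lemma psd_smul_real {M : Matrix ι ι ℂ} (hM : M.PosSemidef) {c : ℝ} (hc : 0 ≤ c) :
    ((c:ℂ) • M).PosSemidef := by
  refine posSemidef_of_re ?_ fun x => ?_
  · ext i j; simp [conjTranspose_apply, Matrix.smul_apply, ← hM.isHermitian.apply i j]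
  · rw [smul_mulVec, dotProduct_smul]
    have := hM.re_dotProduct_nonneg x
    rw [RCLike.re_to_complex] at this
    simp only [smul_eq_mul, Complex.mul_re, Complex.ofReal_re, Complex.ofReal_im]
    simp
    positivity


-- ===== separability lemmas =====

lemma star_fun_eq (v : Fin m × Fin n → ℂ) : (fun q => starRingEnd ℂ (v q)) = star v := rfl

lemma sep_zero : IsSeparableState (0 : Matrix (Fin m × Fin n) (Fin m × Fin n) ℂ) :=
  ⟨0, fun i => 0, fun i => 0, by simp⟩

lemma sep_add {ρ₁ ρ₂ : Matrix (Fin m × Fin n) (Fin m × Fin n) ℂ}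
    (h1 : IsSeparableState ρ₁) (h2 : IsSeparableState ρ₂) : IsSeparableState (ρ₁ + ρ₂) := by
  obtain ⟨k1, a1, b1, rfl⟩ := h1
  obtain ⟨k2, a2, b2, rfl⟩ := h2
  refine ⟨k1 + k2, Fin.append a1 a2, Fin.append b1 b2, ?_⟩
  rw [Fin.sum_univ_add]
  congr 1 <;> apply Finset.sum_congr rfl <;> intro i _ <;>
    simp [Fin.append_left, Fin.append_right]

lemma sep_outer (a : Fin m → ℂ) (b : Fin n → ℂ) :
    IsSeparableState (vecMulVec (prodVec a b) (star (prodVec a b))) :=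
  ⟨1, fun _ => a, fun _ => b, by simp [star_fun_eq]⟩

lemma sep_smul {ρ : Matrix (Fin m × Fin n) (Fin m × Fin n) ℂ} (h : IsSeparableState ρ)
    {c : ℝ} (hc : 0 ≤ c) : IsSeparableState ((c:ℂ) • ρ) := by
  obtain ⟨k, a, b, rfl⟩ := h
  refine ⟨k, fun i => (Real.sqrt c : ℂ) • a i, b, ?_⟩
  rw [Finset.smul_sum]
  apply Finset.sum_congr rfl
  intro i _
  ext p q
  simp only [Matrix.smul_apply, vecMulVec_apply, prodVec, Pi.smul_apply, smul_eq_mul, _root_.map_mul,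
    Complex.conj_ofReal]
  have hs : (Real.sqrt c : ℂ) * (Real.sqrt c : ℂ) = (c : ℂ) := by
    rw [← Complex.ofReal_mul, Real.mul_self_sqrt hc]
  rw [← hs]
  ring

-- ===== ptrans lemmas =====

lemma ptrans_sub_smul (X Y : Matrix (Fin m × Fin n) (Fin m × Fin n) ℂ) (c : ℂ) :
    ptrans (X - c • Y) = ptrans X - c • ptrans Y := by
  ext p q; simp [ptrans]

lemma ptrans_outer (a : Fin m → ℂ) (b : Fin n → ℂ) :
    ptrans (vecMulVec (prodVec a b) (star (prodVec a b)))
      = vecMulVec (prodVec a (fun j => starRingEnd ℂ (b j)))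
          (star (prodVec a (fun j => starRingEnd ℂ (b j)))) := by
  ext p q
  simp only [ptrans, vecMulVec_apply, prodVec, Pi.star_apply, RCLike.star_def, _root_.map_mul,
    Complex.conj_conj]
  ring

lemma prodVec_conj_ne_zero {a : Fin m → ℂ} {b : Fin n → ℂ} (h : prodVec a b ≠ 0) :
    prodVec a (fun j => starRingEnd ℂ (b j)) ≠ 0 := by
  intro hz
  apply h
  funext p
  have := congrFun hz p
  simp only [prodVec, Pi.zero_apply] at this ⊢
  rcases mul_eq_zero.mp this with h1 | h1
  · rw [h1, zero_mul]
  · rw [show b p.2 = 0 from by simpa using congrArg (starRingEnd ℂ) h1, mul_zero]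

lemma sep_posSemidef {ρ : Matrix (Fin m × Fin n) (Fin m × Fin n) ℂ}
    (h : IsSeparableState ρ) : ρ.PosSemidef := by
  obtain ⟨k, a, b, rfl⟩ := h
  apply Finset.sum_induction
    (fun i => Matrix.vecMulVec (prodVec (a i) (b i)) (fun q => starRingEnd ℂ (prodVec (a i) (b i) q)))
    (fun M => M.PosSemidef) (fun A B hA hB => hA.add hB) Matrix.PosSemidef.zero
  intro i _
  rw [star_fun_eq]
  exact outer_posSemidef _

lemma range_smul_mat {N : Type*} [Fintype N] (M : Matrix N N ℂ) {c : ℂ} (hc : c ≠ 0) :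
    LinearMap.range (c • M).mulVecLin = LinearMap.range M.mulVecLin := by
  ext x
  constructor
  · rintro ⟨y, rfl⟩
    exact ⟨c • y, by simp [mulVecLin_apply, smul_mulVec, mulVec_smul, smul_comm]⟩
  · rintro ⟨y, rfl⟩
    exact ⟨c⁻¹ • y, by
      simp only [mulVecLin_apply, smul_mulVec, mulVec_smul, smul_smul]
      rw [inv_mul_cancel₀ hc, one_smul]⟩

def IsEdge (δ : Matrix (Fin m × Fin n) (Fin m × Fin n) ℂ) : Prop :=
  ∀ (a : Fin m → ℂ) (b : Fin n → ℂ), prodVec a b ≠ 0 →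
    ¬ (prodVec a b ∈ LinearMap.range δ.mulVecLin ∧
        prodVec a (fun j => starRingEnd ℂ (b j)) ∈ LinearMap.range (ptrans δ).mulVecLin)

lemma decomp_aux : ∀ (r : ℕ) (σ : Matrix (Fin m × Fin n) (Fin m × Fin n) ℂ),
    σ.PosSemidef → (ptrans σ).PosSemidef → σ.rank + (ptrans σ).rank ≤ r →
    ∃ s e, IsSeparableState s ∧ e.PosSemidef ∧ (ptrans e).PosSemidef ∧ IsEdge e ∧ σ = s + e := by
  intro r
  induction r with
  | zero =>
    intro σ hps hppt hrk
    by_cases he : IsEdge σ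
    · exact ⟨0, σ, sep_zero, hps, hppt, he, (zero_add σ).symm⟩
    · exfalso
      simp only [IsEdge, not_forall, not_not] at he
      obtain ⟨a, b, hab, hm1, hm2⟩ := he
      obtain ⟨t, ht0, hA', hB', hlt⟩ := core_subtract hps hppt hab
        (prodVec_conj_ne_zero hab) hm1 hm2
      omega
  | succ r ih =>
    intro σ hps hppt hrk
    by_cases he : IsEdge σ
    · exact ⟨0, σ, sep_zero, hps, hppt, he, (zero_add σ).symm⟩
    · simp only [IsEdge, not_forall, not_not] at he
      obtain ⟨a, b, hab, hm1, hm2⟩ := he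
      obtain ⟨t, ht0, hA', hB', hlt⟩ := core_subtract hps hppt hab
        (prodVec_conj_ne_zero hab) hm1 hm2
      set v := prodVec a b with hv
      set σ' := σ - (t:ℂ) • vecMulVec v (star v) with hσ'
      have hpt : ptrans σ' = ptrans σ - (t:ℂ) • vecMulVec (prodVec a (fun j => starRingEnd ℂ (b j)))
          (star (prodVec a (fun j => starRingEnd ℂ (b j)))) := by
        rw [hσ', ptrans_sub_smul, ptrans_outer]
      have hppt' : (ptrans σ').PosSemidef := by rw [hpt]; exact hB'
      have hrk' : σ'.rank + (ptrans σ').rank ≤ r := by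
        rw [hpt]; omega
      obtain ⟨s', e', hs', he'p, he'pt, he'e, hde⟩ := ih σ' hA' hppt' hrk'
      refine ⟨(t:ℂ) • vecMulVec v (star v) + s', e', ?_, he'p, he'pt, he'e, ?_⟩
      · exact sep_add (sep_smul (sep_outer a b) ht0) hs'
      · have : σ = (t:ℂ) • vecMulVec v (star v) + σ' := by rw [hσ']; abel
        rw [this, hde, add_assoc]

lemma ptrans_smul (X : Matrix (Fin m × Fin n) (Fin m × Fin n) ℂ) (c : ℂ) :
    ptrans (c • X) = c • ptrans X := by
  ext p q; simp [ptrans]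

lemma trace_outer_single (i₀ : Fin m) (j₀ : Fin n) :
    (vecMulVec (prodVec (Pi.single i₀ 1) (Pi.single j₀ 1))
      (star (prodVec (Pi.single i₀ 1) (Pi.single j₀ 1)))).trace = 1 := by
  rw [Matrix.trace]
  simp only [diag, vecMulVec_apply, prodVec, Pi.star_apply, Pi.single_apply]
  rw [Fintype.sum_prod_type]
  simp [apply_ite, Finset.sum_ite_eq]


/-- Theorem 1(ii): every PPT entangled state decomposes as a convex
combination of a separable state and an edge state. -/
theorem ppt_entangled_decomposition (m n : ℕ)
    (ρ : Matrix (Fin m × Fin n) (Fin m × Fin n) ℂ)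
    (htr : ρ.trace = 1) (hpos : ρ.PosSemidef) (hppt : (ptrans ρ).PosSemidef)
    (hent : ¬ IsSeparableState ρ) :
    ∃ (p : ℝ), 0 < p ∧ p ≤ 1 ∧
      ∃ (ρsep δ : Matrix (Fin m × Fin n) (Fin m × Fin n) ℂ),
        IsSeparableState ρsep ∧ ρsep.trace = 1 ∧
        δ.trace = 1 ∧ δ.PosSemidef ∧ (ptrans δ).PosSemidef ∧
        (∀ (a : Fin m → ℂ) (b : Fin n → ℂ), prodVec a b ≠ 0 →
          ¬ (prodVec a b ∈ LinearMap.range δ.mulVecLin ∧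
              prodVec a (fun j => starRingEnd ℂ (b j)) ∈
                LinearMap.range (ptrans δ).mulVecLin)) ∧
        ρ = ((1 : ℂ) - (p : ℂ)) • ρsep + (p : ℂ) • δ := by
  have hnonempty : Nonempty (Fin m × Fin n) := by
    by_contra h
    rw [not_nonempty_iff] at h
    rw [Matrix.trace_eq_zero_of_isEmpty] at htr
    exact absurd htr (by norm_num)
  obtain ⟨s, e, hs, hep, hept, hee, hρ⟩ :=
    decomp_aux (ρ.rank + (ptrans ρ).rank) ρ hpos hppt le_rfl
  have hsp := sep_posSemidef hs
  have htrsum : s.trace + e.trace = 1 := by rw [hρ, trace_add] at htr; exact htr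
  have he0 : e ≠ 0 := by
    rintro rfl
    rw [add_zero] at hρ
    exact hent (hρ ▸ hs)
  -- real traces
  have hetr := psd_trace_nonneg hep
  have hstr := psd_trace_nonneg hsp
  rw [Complex.nonneg_iff] at hetr hstr
  set T : ℝ := e.trace.re with hTdef
  set Q : ℝ := s.trace.re with hQdef
  have heT : e.trace = (T : ℂ) := Complex.ext rfl (by simp [← hetr.2])
  have hsQ : s.trace = (Q : ℂ) := Complex.ext rfl (by simp [← hstr.2])
  have hQT : Q + T = 1 := by
    have := congrArg Complex.re htrsum
    simpa [hQdef, hTdef] using this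
  have hT0 : 0 < T := by
    rcases lt_or_eq_of_le hetr.1 with h | h
    · exact h
    · exfalso
      exact he0 (psd_trace_zero hep (by rw [heT, ← h]; simp))
  have hT1 : T ≤ 1 := by linarith [hstr.1]
  have hTne : ((T⁻¹ : ℝ) : ℂ) ≠ 0 := by
    simp [Complex.ofReal_ne_zero]
    positivity
  set δ : Matrix (Fin m × Fin n) (Fin m × Fin n) ℂ := ((T⁻¹ : ℝ) : ℂ) • e with hδdef
  have hδtr : δ.trace = 1 := by
    rw [hδdef, trace_smul, heT, smul_eq_mul, ← Complex.ofReal_mul,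
      inv_mul_cancel₀ (ne_of_gt hT0)]
    norm_num
  have hδp : δ.PosSemidef := psd_smul_real hep (inv_nonneg.mpr (le_of_lt hT0))
  have hδpt : ptrans δ = ((T⁻¹ : ℝ) : ℂ) • ptrans e := ptrans_smul e _
  have hδptp : (ptrans δ).PosSemidef := by
    rw [hδpt]; exact psd_smul_real hept (inv_nonneg.mpr (le_of_lt hT0))
  have hδedge : ∀ (a : Fin m → ℂ) (b : Fin n → ℂ), prodVec a b ≠ 0 →
      ¬ (prodVec a b ∈ LinearMap.range δ.mulVecLin ∧
          prodVec a (fun j => starRingEnd ℂ (b j)) ∈ LinearMap.range (ptrans δ).mulVecLin) := by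
    intro a b hab ⟨h1, h2⟩
    apply hee a b hab
    rw [hδdef, range_smul_mat _ hTne] at h1
    rw [hδpt, range_smul_mat _ hTne] at h2
    exact ⟨h1, h2⟩
  have hTδe : (T : ℂ) • δ = e := by
    rw [hδdef, smul_smul, ← Complex.ofReal_mul, mul_inv_cancel₀ (ne_of_gt hT0)]
    simp
  refine ⟨T, hT0, hT1, ?_⟩
  by_cases hQ0 : Q = 0
  · -- s = 0
    have hs0 : s = 0 := psd_trace_zero hsp (by rw [hsQ, hQ0]; simp)
    obtain ⟨⟨i₀, j₀⟩⟩ := hnonempty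
    refine ⟨vecMulVec (prodVec (Pi.single i₀ 1) (Pi.single j₀ 1))
        (star (prodVec (Pi.single i₀ 1) (Pi.single j₀ 1))), δ,
      sep_outer _ _, trace_outer_single i₀ j₀, hδtr, hδp, hδptp, hδedge, ?_⟩
    have hT1' : T = 1 := by linarith
    rw [show ((1:ℂ) - (T:ℝ)) = 0 by rw [hT1']; norm_num, zero_smul, zero_add, hTδe,
      hρ, hs0, zero_add]
  · have hQpos : 0 < Q := lt_of_le_of_ne hstr.1 (Ne.symm hQ0)
    refine ⟨((Q⁻¹ : ℝ) : ℂ) • s, δ, sep_smul hs (inv_nonneg.mpr (le_of_lt hQpos)), ?_,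
      hδtr, hδp, hδptp, hδedge, ?_⟩
    · rw [trace_smul, hsQ, smul_eq_mul, ← Complex.ofReal_mul, inv_mul_cancel₀ hQ0]
      norm_num
    · have h1 : ((1:ℂ) - (T:ℝ)) = (Q : ℂ) := by
        rw [show ((1:ℂ)) = ((1:ℝ):ℂ) by norm_num, ← Complex.ofReal_sub]
        congr 1
        linarith
      rw [h1, smul_smul, ← Complex.ofReal_mul, mul_inv_cancel₀ hQ0, hTδe]
      simp [hρ]
end
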